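/- Bazhanov–Lukyanov–Zamolodchikov bases: (i) the vectors e_{j,p} = U(ζ)^j · a_B^p (|0⟩ ⊗ |−1⟩), j,p ≥ 0, form a K-basis of W⁺ ⊗ W⁻; (ii) if in addition ζ² ≠ q^{2n} for every integer n, then the vectors f_{j,p} = ((1 − ζq⁻²·Z'(ζ⁻¹))·a_B)^j · (V'(ζ⁻¹))^p (|−1⟩ ⊗ |0⟩), j,p ≥ 0, form a K-basis of W⁻ ⊗ W⁺. -/

import Mathlib

noncomputable section

/- We model a tensor product `W ⊗ W'` of two spaces with bases indexed by `ℕ` as the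
space of finitely supported functions `(ℕ × ℕ) →₀ K`; `eb k l` is the basis vector
indexed by `(k, l)`. For the factor `W⁺` the index `k` labels the state `|k⟩`
(`k ≥ 0`), and for the factor `W⁻` the index `m` labels the state `|−1−m⟩`. -/

/-- The basis vector indexed by `(k, l)`. -/
def eb {K : Type*} [Field K] (k l : ℕ) : (ℕ × ℕ) →₀ K := Finsupp.single (k, l) 1

/-- The endomorphism of `(ℕ × ℕ) →₀ K` determined by prescribed images of the basis
vectors. -/
def opOf {K : Type*} [Field K] (g : ℕ × ℕ → ((ℕ × ℕ) →₀ K)) :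
    Module.End K ((ℕ × ℕ) →₀ K) :=
  Finsupp.lsum K fun p => LinearMap.toSpanSingleton K ((ℕ × ℕ) →₀ K) (g p)

namespace WpWm  -- `W⁺ ⊗ W⁻`: first index plus-type (label A), second minus-type (label B)

variable {K : Type*} [Field K]

/-- `a_A`: `a|k⟩ = (1 − q^{2k})|k−1⟩` on the first factor. -/
def aA (q : K) : Module.End K ((ℕ × ℕ) →₀ K) :=
  opOf fun p => (1 - q ^ (2 * p.1)) • eb (p.1 - 1) p.2

/-- `a*_A`: `a*|k⟩ = |k+1⟩` on the first factor. -/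
def aAs {K : Type*} [Field K] : Module.End K ((ℕ × ℕ) →₀ K) :=
  opOf fun p => eb (p.1 + 1) p.2

/-- `d_A = q^{D_A}`: `d|k⟩ = q^k|k⟩` on the first factor. -/
def dA (q : K) : Module.End K ((ℕ × ℕ) →₀ K) :=
  opOf fun p => q ^ p.1 • eb p.1 p.2

/-- `d_A⁻¹`. -/
def dAi (q : K) : Module.End K ((ℕ × ℕ) →₀ K) :=
  opOf fun p => (q ^ p.1)⁻¹ • eb p.1 p.2

/-- `a_B`: `a|−1−m⟩ = (1 − q^{−2−2m})|−2−m⟩` on the second factor. -/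
def aB (q : K) : Module.End K ((ℕ × ℕ) →₀ K) :=
  opOf fun p => (1 - (q ^ (2 * p.2 + 2))⁻¹) • eb p.1 (p.2 + 1)

/-- `a*_B`: `a*|−1−m⟩ = |−m⟩`, with `a*|−1⟩ = 0`, on the second factor. -/
def aBs {K : Type*} [Field K] : Module.End K ((ℕ × ℕ) →₀ K) :=
  opOf fun p => if p.2 = 0 then 0 else eb p.1 (p.2 - 1)

/-- `d_B = q^{D_B}`: `d|−1−m⟩ = q^{−1−m}|−1−m⟩` on the second factor. -/
def dB (q : K) : Module.End K ((ℕ × ℕ) →₀ K) :=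
  opOf fun p => (q ^ (p.2 + 1))⁻¹ • eb p.1 p.2

/-- `d_B⁻¹`. -/
def dBi (q : K) : Module.End K ((ℕ × ℕ) →₀ K) :=
  opOf fun p => q ^ (p.2 + 1) • eb p.1 p.2

/-- `U(ζ) = ζ·a*_A + a_B·d_A²`. -/
def Uop (q ζ : K) : Module.End K ((ℕ × ℕ) →₀ K) := ζ • aAs + aB q * dA q ^ 2

/-- `V(ζ) = ζ·a*_B + a_A·d_B²`. -/
def Vop (q ζ : K) : Module.End K ((ℕ × ℕ) →₀ K) := ζ • aBs + aA q * dB q ^ 2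

/-- `Y(ζ) = (ζq² − a_A·a_B)·d_A²`. -/
def Yop (q ζ : K) : Module.End K ((ℕ × ℕ) →₀ K) :=
  (ζ * q ^ 2) • dA q ^ 2 - aA q * aB q * dA q ^ 2

/-- `Z(ζ) = ζ⁻¹q²·d_B² − a*_A·a*_B·d_A⁻²`. -/
def Zop (q ζ : K) : Module.End K ((ℕ × ℕ) →₀ K) :=
  (ζ⁻¹ * q ^ 2) • dB q ^ 2 - aAs * aBs * dAi q ^ 2

/-- `e_{j,p} = U(ζ)^j · a_B^p (|0⟩ ⊗ |−1⟩)`. -/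
def evec (q ζ : K) (j p : ℕ) : (ℕ × ℕ) →₀ K :=
  ((Uop q ζ) ^ j * (aB q) ^ p) (eb 0 0)

end WpWm

namespace WmWp  -- `W⁻ ⊗ W⁺`: first index minus-type (label B), second plus-type (label A)

variable {K : Type*} [Field K]

/-- `a_B` on the first factor. -/
def aB (q : K) : Module.End K ((ℕ × ℕ) →₀ K) :=
  opOf fun p => (1 - (q ^ (2 * p.1 + 2))⁻¹) • eb (p.1 + 1) p.2

/-- `a*_B` on the first factor (`a*|−1⟩ = 0`). -/
def aBs {K : Type*} [Field K] : Module.End K ((ℕ × ℕ) →₀ K) :=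
  opOf fun p => if p.1 = 0 then 0 else eb (p.1 - 1) p.2

/-- `d_B` on the first factor. -/
def dB (q : K) : Module.End K ((ℕ × ℕ) →₀ K) :=
  opOf fun p => (q ^ (p.1 + 1))⁻¹ • eb p.1 p.2

/-- `d_B⁻¹` on the first factor. -/
def dBi (q : K) : Module.End K ((ℕ × ℕ) →₀ K) :=
  opOf fun p => q ^ (p.1 + 1) • eb p.1 p.2

/-- `a_A` on the second factor. -/
def aA (q : K) : Module.End K ((ℕ × ℕ) →₀ K) :=
  opOf fun p => (1 - q ^ (2 * p.2)) • eb p.1 (p.2 - 1)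

/-- `a*_A` on the second factor. -/
def aAs {K : Type*} [Field K] : Module.End K ((ℕ × ℕ) →₀ K) :=
  opOf fun p => eb p.1 (p.2 + 1)

/-- `d_A` on the second factor. -/
def dA (q : K) : Module.End K ((ℕ × ℕ) →₀ K) :=
  opOf fun p => q ^ p.2 • eb p.1 p.2

/-- `d_A⁻¹` on the second factor. -/
def dAi (q : K) : Module.End K ((ℕ × ℕ) →₀ K) :=
  opOf fun p => (q ^ p.2)⁻¹ • eb p.1 p.2

/-- `U'(η) = η·a*_B + a_A·d_B²`. -/
def Uop (q η : K) : Module.End K ((ℕ × ℕ) →₀ K) := η • aBs + aA q * dB q ^ 2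

/-- `V'(η) = η·a*_A + a_B·d_A²`. -/
def Vop (q η : K) : Module.End K ((ℕ × ℕ) →₀ K) := η • aAs + aB q * dA q ^ 2

/-- `Y'(η) = (ηq² − a_B·a_A)·d_B²`. -/
def Yop (q η : K) : Module.End K ((ℕ × ℕ) →₀ K) :=
  (η * q ^ 2) • dB q ^ 2 - aB q * aA q * dB q ^ 2

/-- `Z'(η) = η⁻¹q²·d_A² − a*_B·a*_A·d_B⁻²`. -/
def Zop (q η : K) : Module.End K ((ℕ × ℕ) →₀ K) :=
  (η⁻¹ * q ^ 2) • dA q ^ 2 - aBs * aAs * dBi q ^ 2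

/-- `f_{j,p} = ((1 − ζq⁻²·Z'(ζ⁻¹))·a_B)^j · (V'(ζ⁻¹))^p (|−1⟩ ⊗ |0⟩)`. -/
def fvec (q ζ : K) (j p : ℕ) : (ℕ × ℕ) →₀ K :=
  (((1 - (ζ * (q ^ 2)⁻¹) • Zop q ζ⁻¹) * aB q) ^ j * (Vop q ζ⁻¹) ^ p) (eb 0 0)

end WmWp

section Aux

variable {K : Type*} [Field K]

lemma opOf_single (g : ℕ × ℕ → ((ℕ × ℕ) →₀ K)) (x : ℕ × ℕ) (c : K) :
    opOf g (Finsupp.single x c) = c • g x := by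
  simp [opOf, LinearMap.toSpanSingleton_apply]

lemma opOf_eb (g : ℕ × ℕ → ((ℕ × ℕ) →₀ K)) (a b : ℕ) :
    opOf g (eb a b) = g (a, b) := by
  rw [eb, opOf_single, one_smul]

lemma end_ext {f g : Module.End K ((ℕ × ℕ) →₀ K)}
    (h : ∀ a b : ℕ, f (eb a b) = g (eb a b)) : f = g := by
  apply Finsupp.lhom_ext (fun x c => ?_)
  have : (Finsupp.single x c : (ℕ × ℕ) →₀ K) = c • eb x.1 x.2 := by
    simp [eb, Finsupp.smul_single']
  rw [this, map_smul, map_smul, h]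

/-- the set of indices of total degree `n`. -/
def degSet (n : ℕ) : Set (ℕ × ℕ) := {x | x.1 + x.2 = n}

lemma degSet_finite (n : ℕ) : (degSet n).Finite := by
  apply Set.Finite.ofFinset (Finset.HasAntidiagonal.antidiagonal n)
  intro x; simp [degSet]

lemma eb_mem_supported {a b n : ℕ} (h : a + b = n) :
    (eb a b : (ℕ × ℕ) →₀ K) ∈ Finsupp.supported K K (degSet n) :=
  Finsupp.single_mem_supported K 1 h

/-- Key abstract lemma. -/
lemma key (P Q : Module.End K ((ℕ × ℕ) →₀ K))
    (hPQ : P * Q = Q * P)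
    (hP : ∀ n, ∀ x : ℕ × ℕ, x.1 + x.2 = n →
      P (eb x.1 x.2) ∈ Finsupp.supported K K (degSet (n + 1)))
    (hQ : ∀ n, ∀ x : ℕ × ℕ, x.1 + x.2 = n →
      Q (eb x.1 x.2) ∈ Finsupp.supported K K (degSet (n + 1)))
    (hcov : ∀ n, ∀ x : ℕ × ℕ, x.1 + x.2 = n + 1 →
      (eb x.1 x.2 : (ℕ × ℕ) →₀ K) ∈
        Submodule.map P (Finsupp.supported K K (degSet n)) ⊔
          Submodule.map Q (Finsupp.supported K K (degSet n))) :
    LinearIndependent K (fun jp : ℕ × ℕ => (P ^ jp.1 * Q ^ jp.2) (eb 0 0)) ∧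
      Submodule.span K (Set.range fun jp : ℕ × ℕ => (P ^ jp.1 * Q ^ jp.2) (eb 0 0)) = ⊤ := by
  classical
  set g : ℕ × ℕ → ((ℕ × ℕ) →₀ K) := fun jp => (P ^ jp.1 * Q ^ jp.2) (eb 0 0) with hg
  -- extend hP, hQ to supported elements
  have hPf : ∀ n, ∀ f ∈ Finsupp.supported K K (degSet n),
      P f ∈ Finsupp.supported K K (degSet (n + 1)) := by
    intro n f hf
    rw [Finsupp.supported_eq_span_single] at hf
    induction hf using Submodule.span_induction with
    | mem x hx =>
      obtain ⟨y, hy, rfl⟩ := hx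
      simpa [eb] using hP n y hy
    | zero => simp
    | add x y _ _ hx hy => rw [map_add]; exact Submodule.add_mem _ hx hy
    | smul c x _ hx => rw [map_smul]; exact Submodule.smul_mem _ _ hx
  have hQf : ∀ n, ∀ f ∈ Finsupp.supported K K (degSet n),
      Q f ∈ Finsupp.supported K K (degSet (n + 1)) := by
    intro n f hf
    rw [Finsupp.supported_eq_span_single] at hf
    induction hf using Submodule.span_induction with
    | mem x hx =>
      obtain ⟨y, hy, rfl⟩ := hx
      simpa [eb] using hQ n y hy
    | zero => simp
    | add x y _ _ hx hy => rw [map_add]; exact Submodule.add_mem _ hx hy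
    | smul c x _ hx => rw [map_smul]; exact Submodule.smul_mem _ _ hx
  have gsucc1 : ∀ j p : ℕ, g (j + 1, p) = P (g (j, p)) := by
    intro j p
    show (P ^ (j + 1) * Q ^ p) (eb 0 0) = (P * (P ^ j * Q ^ p)) (eb 0 0)
    rw [pow_succ', mul_assoc]
  have gsucc2 : ∀ j p : ℕ, g (j, p + 1) = Q (g (j, p)) := by
    intro j p
    show (P ^ j * Q ^ (p + 1)) (eb 0 0) = (Q * (P ^ j * Q ^ p)) (eb 0 0)
    have hc : Q * P ^ j = P ^ j * Q := by
      have : Commute Q P := hPQ.symm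
      exact (this.pow_right j)
    rw [← mul_assoc, hc, mul_assoc, ← pow_succ']
  have ghom : ∀ j p : ℕ, g (j, p) ∈ Finsupp.supported K K (degSet (j + p)) := by
    intro j
    induction j with
    | zero =>
      intro p
      induction p with
      | zero =>
        show (P ^ 0 * Q ^ 0) (eb 0 0) ∈ _
        simpa using eb_mem_supported (by simp : (0:ℕ) + 0 = 0)
      | succ p ih =>
        rw [gsucc2]
        exact hQf _ _ ih
    | succ j ih =>
      intro p
      rw [gsucc1]
      have := hPf (j + p) _ (ih p)
      convert this using 3
      omega
  -- each graded piece is spanned by the degree-n vectors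
  have span_deg : ∀ n, Finsupp.supported K K (degSet n) ≤
      Submodule.span K (g '' degSet n) := by
    intro n
    induction n with
    | zero =>
      rw [Finsupp.supported_eq_span_single, Submodule.span_le]
      rintro _ ⟨x, hx, rfl⟩
      have hx0 : x = (0, 0) := by
        have : x.1 + x.2 = 0 := hx
        have h1 : x.1 = 0 := by omega
        have h2 : x.2 = 0 := by omega
        exact Prod.ext h1 h2
      subst hx0
      apply Submodule.subset_span
      exact ⟨(0, 0), by simp [degSet], by simp [hg, eb]⟩
    | succ n ih =>
      have step1 : Finsupp.supported K K (degSet (n + 1)) ≤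
          Submodule.map P (Finsupp.supported K K (degSet n)) ⊔
            Submodule.map Q (Finsupp.supported K K (degSet n)) := by
        rw [Finsupp.supported_eq_span_single, Submodule.span_le]
        rintro _ ⟨x, hx, rfl⟩
        simpa [eb] using hcov n x hx
      refine le_trans step1 (sup_le ?_ ?_)
      · refine le_trans (Submodule.map_mono ih) ?_
        rw [Submodule.map_span, Submodule.span_le]
        rintro _ ⟨_, ⟨x, hx, rfl⟩, rfl⟩
        apply Submodule.subset_span
        refine ⟨(x.1 + 1, x.2), by simp only [degSet, Set.mem_setOf_eq] at hx ⊢; omega, ?_⟩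
        simpa using gsucc1 x.1 x.2
      · refine le_trans (Submodule.map_mono ih) ?_
        rw [Submodule.map_span, Submodule.span_le]
        rintro _ ⟨_, ⟨x, hx, rfl⟩, rfl⟩
        apply Submodule.subset_span
        refine ⟨(x.1, x.2 + 1), by simp only [degSet, Set.mem_setOf_eq] at hx ⊢; omega, ?_⟩
        simpa using gsucc2 x.1 x.2
  -- spanning
  have hspan : Submodule.span K (Set.range g) = ⊤ := by
    rw [eq_top_iff, ← (Finsupp.basisSingleOne (R := K) (ι := ℕ × ℕ)).span_eq,
      Submodule.span_le]
    rintro _ ⟨x, rfl⟩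
    have h1 : (Finsupp.basisSingleOne (R := K) (ι := ℕ × ℕ)) x = eb x.1 x.2 := by
      simp [eb, Finsupp.coe_basisSingleOne]
    rw [h1]
    have h2 : (eb x.1 x.2 : (ℕ × ℕ) →₀ K) ∈ Finsupp.supported K K (degSet (x.1 + x.2)) :=
      eb_mem_supported rfl
    exact Submodule.span_mono (Set.image_subset_range _ _) (span_deg _ h2)
  -- per-degree injectivity
  have inj_deg : ∀ n, ∀ c : (ℕ × ℕ) →₀ K, c ∈ Finsupp.supported K K (degSet n) →
      Finsupp.linearCombination K g c = 0 → c = 0 := by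
    intro n c hc hc0
    haveI : FiniteDimensional K (Finsupp.supported K K (degSet n)) := by
      have h1 : FiniteDimensional K
          (Submodule.span K ((fun i => Finsupp.single i (1 : K)) '' degSet n)) :=
        FiniteDimensional.span_of_finite K ((degSet_finite n).image _)
      rwa [← Finsupp.supported_eq_span_single] at h1
    set Φ : Finsupp.supported K K (degSet n) →ₗ[K] Finsupp.supported K K (degSet n) :=
      (Finsupp.restrictDom K K (degSet n)).comp
        ((Finsupp.linearCombination K g).comp (Submodule.subtype _)) with hΦ
    have hsurj : Function.Surjective Φ := by
      rintro ⟨y, hy⟩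
      have h1 : y ∈ Submodule.span K (g '' degSet n) := span_deg n hy
      obtain ⟨c', hc', hcy⟩ := (Finsupp.mem_span_image_iff_linearCombination K).1 h1
      refine ⟨⟨c', hc'⟩, ?_⟩
      apply Subtype.ext
      show Finsupp.filter (· ∈ degSet n) (Finsupp.linearCombination K g c') = y
      rw [hcy]
      ext a
      rw [Finsupp.filter_apply]
      by_cases ha : a ∈ degSet n
      · simp [ha]
      · simp only [ha, if_false]
        exact (Finsupp.mem_supported' K y).1 hy a ha |>.symm ▸ rfl
    have hinj : Function.Injective Φ := by
      have := @LinearMap.injective_iff_surjective K (Finsupp.supported K K (degSet n)) _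
        (Submodule.addCommGroup _) _ _ Φ
      exact this.2 hsurj
    have h0 : Φ ⟨c, hc⟩ = 0 := by
      apply Subtype.ext
      show Finsupp.filter (· ∈ degSet n) (Finsupp.linearCombination K g c) = _
      rw [hc0]
      simp [Finsupp.filter_zero]
    have := hinj (h0.trans (map_zero Φ).symm)
    exact congrArg Subtype.val this
  -- projection commutes with linearCombination
  have hproj : ∀ n : ℕ, ∀ l : (ℕ × ℕ) →₀ K,
      Finsupp.filter (· ∈ degSet n) (Finsupp.linearCombination K g l) =
        Finsupp.linearCombination K g (Finsupp.filter (· ∈ degSet n) l) := by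
    intro n
    set π : ((ℕ × ℕ) →₀ K) →ₗ[K] ((ℕ × ℕ) →₀ K) :=
      (Submodule.subtype _).comp (Finsupp.restrictDom K K (degSet n)) with hπ
    have hπa : ∀ f : (ℕ × ℕ) →₀ K, π f = Finsupp.filter (· ∈ degSet n) f := fun f => rfl
    have hfull : ∀ x : ℕ × ℕ, x ∈ degSet n →
        Finsupp.filter (· ∈ degSet n) (g x) = g x := by
      intro x hx
      ext a
      rw [Finsupp.filter_apply]
      by_cases ha : a ∈ degSet n
      · simp [ha]
      · simp only [ha, if_false]
        refine ((Finsupp.mem_supported' K _).1 (ghom x.1 x.2) a ?_).symm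
        intro hmem
        exact ha (show a.1 + a.2 = n from (show a.1 + a.2 = x.1 + x.2 from hmem).trans hx)
    have hnone : ∀ x : ℕ × ℕ, x ∉ degSet n →
        Finsupp.filter (· ∈ degSet n) (g x) = 0 := by
      intro x hx
      rw [Finsupp.filter_eq_zero_iff]
      intro a ha
      refine (Finsupp.mem_supported' K _).1 (ghom x.1 x.2) a ?_
      intro hmem
      exact hx (show x.1 + x.2 = n from (show a.1 + a.2 = x.1 + x.2 from hmem).symm.trans ha)
    have : π.comp (Finsupp.linearCombination K g) =
        (Finsupp.linearCombination K g).comp π := by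
      apply Finsupp.lhom_ext (fun x c => ?_)
      simp only [LinearMap.comp_apply, Finsupp.linearCombination_single, map_smul, hπa]
      by_cases hx : x ∈ degSet n
      · rw [Finsupp.filter_single_of_pos _ hx, Finsupp.linearCombination_single,
          Finsupp.filter_smul, hfull x hx]
      · rw [Finsupp.filter_single_of_neg _ hx, map_zero, Finsupp.filter_smul,
          hnone x hx, smul_zero]
    intro l
    have := congrArg (fun φ => φ l) this
    simpa [hπa] using this
  -- independence
  have hindep : LinearIndependent K g := by
    rw [linearIndependent_iff]
    intro l hl
    ext x
    set n := x.1 + x.2 with hn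
    have h1 : Finsupp.linearCombination K g (Finsupp.filter (· ∈ degSet n) l) = 0 := by
      rw [← hproj, hl, Finsupp.filter_zero]
    have h2 : Finsupp.filter (· ∈ degSet n) l ∈ Finsupp.supported K K (degSet n) := by
      rw [Finsupp.mem_supported]
      intro a ha
      simp only [Finsupp.support_filter, Finset.coe_filter, Set.mem_setOf_eq] at ha
      exact ha.2
    have h3 := inj_deg n _ h2 h1
    have h4 := congrArg (fun f : (ℕ × ℕ) →₀ K => f x) h3
    simp only [Finsupp.filter_apply, Finsupp.coe_zero, Pi.zero_apply] at h4
    have hx : x ∈ degSet n := rfl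
    rw [if_pos hx] at h4
    exact h4
  exact ⟨hindep, hspan⟩

end Aux

namespace WpWm

variable {K : Type*} [Field K]

lemma aAs_eb (a b : ℕ) : (aAs : Module.End K ((ℕ × ℕ) →₀ K)) (eb a b) = eb (a + 1) b :=
  opOf_eb _ a b

lemma aB_eb (q : K) (a b : ℕ) :
    aB q (eb a b) = (1 - (q ^ (2 * b + 2))⁻¹) • eb a (b + 1) :=
  opOf_eb _ a b

lemma dA_eb (q : K) (a b : ℕ) : dA q (eb a b) = q ^ a • eb a b := opOf_eb _ a b

lemma dA_sq_eb (q : K) (a b : ℕ) : (dA q ^ 2) (eb a b) = q ^ (2 * a) • eb a b := by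
  rw [pow_two, Module.End.mul_apply, dA_eb, map_smul, dA_eb, smul_smul, ← pow_add]
  congr 2
  omega

lemma U_eb (q ζ : K) (a b : ℕ) :
    Uop q ζ (eb a b) = ζ • eb (a + 1) b +
      (q ^ (2 * a) * (1 - (q ^ (2 * b + 2))⁻¹)) • eb a (b + 1) := by
  rw [Uop, LinearMap.add_apply, LinearMap.smul_apply, aAs_eb, Module.End.mul_apply,
    dA_sq_eb, map_smul, aB_eb, smul_smul, mul_comm]

end WpWm

section PartOne

variable {K : Type*} [Field K] (q ζ : K)

lemma one_sub_inv_ne (hq : q ≠ 0) (hq' : ∀ n : ℕ, 0 < n → q ^ n ≠ 1) (b : ℕ) :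
    (1 : K) - (q ^ (2 * b + 2))⁻¹ ≠ 0 := by
  intro h
  have h1 : (q ^ (2 * b + 2))⁻¹ = 1 := by linear_combination -h
  have h2 : q ^ (2 * b + 2) = 1 := by rwa [inv_eq_one] at h1
  exact hq' (2 * b + 2) (by omega) h2

lemma U_aB_comm : WpWm.Uop q ζ * WpWm.aB q = WpWm.aB q * WpWm.Uop q ζ := by
  apply end_ext
  intro a b
  simp only [Module.End.mul_apply, WpWm.U_eb, WpWm.aB_eb, map_add, map_smul,
    WpWm.U_eb, WpWm.aB_eb, smul_smul]
  match_scalars <;> ring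

lemma part_one (hq : q ≠ 0) (hq' : ∀ n : ℕ, 0 < n → q ^ n ≠ 1) (hζ : ζ ≠ 0) :
    LinearIndependent K (fun jp : ℕ × ℕ => (WpWm.Uop q ζ ^ jp.1 * WpWm.aB q ^ jp.2) (eb 0 0)) ∧
      Submodule.span K (Set.range fun jp : ℕ × ℕ =>
        (WpWm.Uop q ζ ^ jp.1 * WpWm.aB q ^ jp.2) (eb 0 0)) = ⊤ := by
  apply key
  · exact U_aB_comm q ζ
  · -- hP
    rintro n ⟨a, b⟩ h
    rw [WpWm.U_eb]
    exact Submodule.add_mem _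
      (Submodule.smul_mem _ _ (eb_mem_supported (by omega)))
      (Submodule.smul_mem _ _ (eb_mem_supported (by omega)))
  · -- hQ
    rintro n ⟨a, b⟩ h
    rw [WpWm.aB_eb]
    exact Submodule.smul_mem _ _ (eb_mem_supported (by omega))
  · -- hcov
    rintro n ⟨a, b⟩ h
    match b with
    | Nat.succ b' =>
      -- eb a (b'+1) = aB ((1 - (q^(2b'+2))⁻¹)⁻¹ • eb a b')
      apply Submodule.mem_sup_right
      refine Submodule.mem_map.2 ⟨(1 - (q ^ (2 * b' + 2))⁻¹)⁻¹ • eb a b',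
        Submodule.smul_mem _ _ (eb_mem_supported (by omega)), ?_⟩
      rw [map_smul, WpWm.aB_eb, smul_smul,
        inv_mul_cancel₀ (one_sub_inv_ne q hq hq' b'), one_smul]
    | 0 =>
      -- a = n+1 : eb (n+1) 0 = U (ζ⁻¹ • eb n 0) + aB ((-(ζ⁻¹ * q^(2n)) ) • eb n 0)
      have ha : a = n + 1 := by omega
      subst ha
      have hrepr : (eb (n + 1) 0 : (ℕ × ℕ) →₀ K) =
          WpWm.Uop q ζ (ζ⁻¹ • eb n 0) + WpWm.aB q ((-(ζ⁻¹ * q ^ (2 * n))) • eb n 0) := by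
        rw [map_smul, map_smul, WpWm.U_eb, WpWm.aB_eb, smul_add, smul_smul, smul_smul,
          smul_smul, inv_mul_cancel₀ hζ]
        match_scalars <;> ring
      rw [hrepr]
      exact Submodule.add_mem _
        (Submodule.mem_sup_left (Submodule.mem_map_of_mem
          (Submodule.smul_mem _ _ (eb_mem_supported (by omega)))))
        (Submodule.mem_sup_right (Submodule.mem_map_of_mem
          (Submodule.smul_mem _ _ (eb_mem_supported (by omega)))))

end PartOne

namespace WmWp

variable {K : Type*} [Field K]

lemma aB_eb (q : K) (m k : ℕ) :
    aB q (eb m k) = (1 - (q ^ (2 * m + 2))⁻¹) • eb (m + 1) k :=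
  opOf_eb _ m k

lemma aAs_eb (m k : ℕ) : (aAs : Module.End K ((ℕ × ℕ) →₀ K)) (eb m k) = eb m (k + 1) :=
  opOf_eb _ m k

lemma dA_eb (q : K) (m k : ℕ) : dA q (eb m k) = q ^ k • eb m k := opOf_eb _ m k

lemma dA_sq_eb (q : K) (m k : ℕ) : (dA q ^ 2) (eb m k) = q ^ (2 * k) • eb m k := by
  rw [pow_two, Module.End.mul_apply, dA_eb, map_smul, dA_eb, smul_smul, ← pow_add]
  congr 2
  omega

lemma dBi_eb (q : K) (m k : ℕ) : dBi q (eb m k) = q ^ (m + 1) • eb m k := opOf_eb _ m k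

lemma dBi_sq_eb (q : K) (m k : ℕ) :
    (dBi q ^ 2) (eb m k) = q ^ (2 * m + 2) • eb m k := by
  rw [pow_two, Module.End.mul_apply, dBi_eb, map_smul, dBi_eb, smul_smul, ← pow_add]
  congr 2
  omega

lemma aBs_eb_succ (m k : ℕ) :
    (aBs : Module.End K ((ℕ × ℕ) →₀ K)) (eb (m + 1) k) = eb m k := by
  rw [show (aBs : Module.End K ((ℕ × ℕ) →₀ K)) (eb (m + 1) k)
      = if m + 1 = 0 then 0 else eb (m + 1 - 1) k from opOf_eb _ _ _]
  simp

lemma V_eb (q η : K) (m k : ℕ) :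
    Vop q η (eb m k) = η • eb m (k + 1) +
      (q ^ (2 * k) * (1 - (q ^ (2 * m + 2))⁻¹)) • eb (m + 1) k := by
  rw [Vop, LinearMap.add_apply, LinearMap.smul_apply, aAs_eb, Module.End.mul_apply,
    dA_sq_eb, map_smul, aB_eb, smul_smul, mul_comm]

lemma Z_eb_succ (q η : K) (m k : ℕ) :
    Zop q η (eb (m + 1) k) = (η⁻¹ * q ^ 2 * q ^ (2 * k)) • eb (m + 1) k
      - q ^ (2 * (m + 1) + 2) • eb m (k + 1) := by
  rw [Zop, LinearMap.sub_apply, LinearMap.smul_apply, dA_sq_eb, smul_smul,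
    Module.End.mul_apply, Module.End.mul_apply, dBi_sq_eb, map_smul, map_smul,
    aAs_eb, aBs_eb_succ]

lemma T_eb (q ζ : K) (hq : q ≠ 0) (m k : ℕ) :
    ((1 - (ζ * (q ^ 2)⁻¹) • Zop q ζ⁻¹) * aB q) (eb m k) =
      ((1 - (q ^ (2 * m + 2))⁻¹) * (1 - ζ ^ 2 * q ^ (2 * k))) • eb (m + 1) k +
        ((1 - (q ^ (2 * m + 2))⁻¹) * (ζ * q ^ (2 * m + 2))) • eb m (k + 1) := by
  rw [Module.End.mul_apply, aB_eb, map_smul, LinearMap.sub_apply, Module.End.one_apply,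
    LinearMap.smul_apply, Z_eb_succ, inv_inv]
  match_scalars
  · field_simp
  · field_simp
    ring

end WmWp

section PartTwo

variable {K : Type*} [Field K] (q ζ : K)

lemma T_V_comm (hq : q ≠ 0) (hζ : ζ ≠ 0) :
    ((1 - (ζ * (q ^ 2)⁻¹) • WmWp.Zop q ζ⁻¹) * WmWp.aB q) * WmWp.Vop q ζ⁻¹ =
      WmWp.Vop q ζ⁻¹ * ((1 - (ζ * (q ^ 2)⁻¹) • WmWp.Zop q ζ⁻¹) * WmWp.aB q) := by
  apply end_ext
  intro m k
  rw [Module.End.mul_apply, WmWp.V_eb, map_add, map_smul, map_smul,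
    WmWp.T_eb q ζ hq, WmWp.T_eb q ζ hq]
  rw [Module.End.mul_apply, WmWp.T_eb q ζ hq, map_add, map_smul, map_smul,
    WmWp.V_eb, WmWp.V_eb]
  have e1 : (q : K) ^ (2 * (m + 1) + 2) = q ^ (2 * m + 2) * q ^ 2 := by
    rw [← pow_add]; congr 1 <;> omega
  have e2 : (q : K) ^ (2 * (k + 1)) = q ^ (2 * k) * q ^ 2 := by
    rw [← pow_add]; congr 1 <;> omega
  rw [e1, e2]
  have ha : (q : K) ^ (2 * m + 2) ≠ 0 := pow_ne_zero _ hq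
  have hb : (q : K) ^ (2 * k) ≠ 0 := pow_ne_zero _ hq
  generalize (q : K) ^ (2 * m + 2) = a at ha ⊢
  generalize (q : K) ^ (2 * k) = b at hb ⊢
  match_scalars <;> (field_simp [ha, hb, hq, hζ]; try ring; try tauto)

lemma zeta_pow_ne (hq : q ≠ 0) (hζ2 : ∀ n : ℤ, ζ ^ 2 ≠ q ^ (2 * n)) (i : ℕ) :
    ζ ^ 2 * q ^ (2 * i) ≠ 1 := by
  intro h
  apply hζ2 (-(i : ℤ))
  have h2 : ζ ^ 2 = (q ^ (2 * i))⁻¹ := by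
    field_simp
    linear_combination h
  have h3 : (q : K) ^ (2 * -(i : ℤ)) = (q ^ (2 * i))⁻¹ := by
    rw [show (2 * -(i : ℤ)) = -((2 * i : ℕ) : ℤ) by push_cast; ring, zpow_neg,
      zpow_natCast]
  rw [h2, h3]

lemma part_two (hq : q ≠ 0) (hq' : ∀ n : ℕ, 0 < n → q ^ n ≠ 1) (hζ : ζ ≠ 0)
    (hζ2 : ∀ n : ℤ, ζ ^ 2 ≠ q ^ (2 * n)) :
    LinearIndependent K (fun jp : ℕ × ℕ =>
      (((1 - (ζ * (q ^ 2)⁻¹) • WmWp.Zop q ζ⁻¹) * WmWp.aB q) ^ jp.1 *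
        WmWp.Vop q ζ⁻¹ ^ jp.2) (eb 0 0)) ∧
      Submodule.span K (Set.range fun jp : ℕ × ℕ =>
        (((1 - (ζ * (q ^ 2)⁻¹) • WmWp.Zop q ζ⁻¹) * WmWp.aB q) ^ jp.1 *
          WmWp.Vop q ζ⁻¹ ^ jp.2) (eb 0 0)) = ⊤ := by
  have hw : ∀ b : ℕ, (1 : K) - (q ^ (2 * b + 2))⁻¹ ≠ 0 := one_sub_inv_ne q hq hq'
  have hzA : ∀ i : ℕ, (1 : K) - ζ ^ 2 * q ^ (2 * i) ≠ 0 := fun i =>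
    sub_ne_zero.mpr (Ne.symm (zeta_pow_ne q ζ hq hζ2 i))
  apply key
  · exact T_V_comm q ζ hq hζ
  · -- hP
    rintro n ⟨m, k⟩ h
    rw [WmWp.T_eb q ζ hq]
    exact Submodule.add_mem _
      (Submodule.smul_mem _ _ (eb_mem_supported (by omega)))
      (Submodule.smul_mem _ _ (eb_mem_supported (by omega)))
  · -- hQ
    rintro n ⟨m, k⟩ h
    rw [WmWp.V_eb]
    exact Submodule.add_mem _
      (Submodule.smul_mem _ _ (eb_mem_supported (by omega)))
      (Submodule.smul_mem _ _ (eb_mem_supported (by omega)))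
  · -- hcov
    rintro n ⟨m, k⟩ h
    match m with
    | Nat.succ m' =>
      have hn : m' + k = n := by omega
      subst hn
      have ha : (q : K) ^ (2 * m' + 2) ≠ 0 := pow_ne_zero _ hq
      have h1 : (1 : K) - (q ^ (2 * m' + 2))⁻¹ ≠ 0 := hw m'
      have h2 : (1 : K) - ζ ^ 2 * q ^ (2 * (m' + k + 1)) ≠ 0 := hzA (m' + k + 1)
      have hc : ((1 : K) - (q ^ (2 * m' + 2))⁻¹) * (1 - ζ ^ 2 * q ^ (2 * (m' + k + 1))) ≠ 0 :=
        mul_ne_zero h1 h2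
      rw [show ((m'.succ, k) : ℕ × ℕ).1 = m' + 1 from rfl,
        show ((m'.succ, k) : ℕ × ℕ).2 = k from rfl]
      rw [← Submodule.smul_mem_iff _ hc]
      have hrepr : (((1 : K) - (q ^ (2 * m' + 2))⁻¹) * (1 - ζ ^ 2 * q ^ (2 * (m' + k + 1)))) •
            (eb (m' + 1) k : (ℕ × ℕ) →₀ K) =
          ((1 - (ζ * (q ^ 2)⁻¹) • WmWp.Zop q ζ⁻¹) * WmWp.aB q) (eb m' k) +
            WmWp.Vop q ζ⁻¹
              ((-((1 - (q ^ (2 * m' + 2))⁻¹) * ζ ^ 2 * q ^ (2 * m' + 2))) • eb m' k) := by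
        rw [map_smul, WmWp.T_eb q ζ hq, WmWp.V_eb]
        rw [smul_add, smul_smul, smul_smul]
        have e1 : (q : K) ^ (2 * (m' + k + 1)) = q ^ (2 * m' + 2) * q ^ (2 * k) := by
          rw [← pow_add]; congr 1 <;> omega
        rw [e1]
        have hb : (q : K) ^ (2 * k) ≠ 0 := pow_ne_zero _ hq
        rw [show (((1 : K) - (q ^ (2 * m' + 2))⁻¹) * (1 - ζ ^ 2 * (q ^ (2 * m' + 2) * q ^ (2 * k)))) •
              (eb (m' + 1) k : (ℕ × ℕ) →₀ K) =
            (((1 : K) - (q ^ (2 * m' + 2))⁻¹) * (1 - ζ ^ 2 * (q ^ (2 * m' + 2) * q ^ (2 * k)))) •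
              (eb (m' + 1) k : (ℕ × ℕ) →₀ K) + (0 : K) • eb m' (k + 1) by
          rw [zero_smul, add_zero]]
        generalize (q : K) ^ (2 * m' + 2) = a at ha ⊢
        generalize (q : K) ^ (2 * k) = b at hb ⊢
        match_scalars
        · field_simp [ha, hb, hζ]
          ring
        · field_simp [ha, hb, hζ]
          ring
      rw [hrepr]
      exact Submodule.add_mem _
        (Submodule.mem_sup_left (Submodule.mem_map_of_mem (eb_mem_supported (by omega))))
        (Submodule.mem_sup_right (Submodule.mem_map_of_mem
          (Submodule.smul_mem _ _ (eb_mem_supported (by omega)))))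
    | 0 =>
      have hk : k = n + 1 := by omega
      subst hk
      have h2 : ζ ^ 2 * (q : K) ^ (2 * n + 2) - 1 ≠ 0 := by
        have h3 := zeta_pow_ne q ζ hq hζ2 (n + 1)
        intro hc
        apply h3
        rw [show (2 * (n + 1)) = 2 * n + 2 by omega]
        linear_combination hc
      have hc : ζ⁻¹ * (ζ ^ 2 * (q : K) ^ (2 * n + 2) - 1) ≠ 0 :=
        mul_ne_zero (inv_ne_zero hζ) h2
      rw [show (((0 : ℕ), n + 1) : ℕ × ℕ).1 = 0 from rfl,
        show (((0 : ℕ), n + 1) : ℕ × ℕ).2 = n + 1 from rfl]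
      rw [← Submodule.smul_mem_iff _ hc]
      have hrepr : (ζ⁻¹ * (ζ ^ 2 * (q : K) ^ (2 * n + 2) - 1)) •
            (eb 0 (n + 1) : (ℕ × ℕ) →₀ K) =
          ((1 - (ζ * (q ^ 2)⁻¹) • WmWp.Zop q ζ⁻¹) * WmWp.aB q) ((q ^ (2 * n) : K) • eb 0 n) +
            WmWp.Vop q ζ⁻¹ ((-((1 : K) - ζ ^ 2 * q ^ (2 * n))) • eb 0 n) := by
        rw [map_smul, map_smul, WmWp.T_eb q ζ hq, WmWp.V_eb]
        rw [smul_add, smul_add, smul_smul, smul_smul, smul_smul, smul_smul]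
        have e1 : (q : K) ^ (2 * n + 2) = q ^ (2 * n) * q ^ 2 := by rw [← pow_add]
        rw [e1]
        rw [show ((ζ⁻¹ * (ζ ^ 2 * ((q : K) ^ (2 * n) * q ^ 2) - 1)) •
              (eb 0 (n + 1) : (ℕ × ℕ) →₀ K)) =
            (0 : K) • (eb 1 n : (ℕ × ℕ) →₀ K) + (ζ⁻¹ * (ζ ^ 2 * ((q : K) ^ (2 * n) * q ^ 2) - 1)) •
              (eb 0 (n + 1) : (ℕ × ℕ) →₀ K) by
          rw [zero_smul, zero_add]]
        have hb : (q : K) ^ (2 * n) ≠ 0 := pow_ne_zero _ hq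
        generalize (q : K) ^ (2 * n) = b at hb ⊢
        match_scalars
        · field_simp [hb, hζ, hq]
          ring
        · field_simp [hb, hζ, hq]
          ring
      rw [hrepr]
      exact Submodule.add_mem _
        (Submodule.mem_sup_left (Submodule.mem_map_of_mem
          (Submodule.smul_mem _ _ (eb_mem_supported (by omega)))))
        (Submodule.mem_sup_right (Submodule.mem_map_of_mem
          (Submodule.smul_mem _ _ (eb_mem_supported (by omega)))))

end PartTwo

/-- Bazhanov–Lukyanov–Zamolodchikov bases: (i) the vectors
`e_{j,p} = U(ζ)^j·a_B^p (|0⟩ ⊗ |−1⟩)` form a `K`-basis of `W⁺ ⊗ W⁻`; (ii) if moreover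
`ζ² ≠ q^{2n}` for every integer `n`, the vectors
`f_{j,p} = ((1 − ζq⁻²·Z'(ζ⁻¹))·a_B)^j·(V'(ζ⁻¹))^p (|−1⟩ ⊗ |0⟩)` form a `K`-basis of
`W⁻ ⊗ W⁺`. -/
theorem BLZ_bases {K : Type*} [Field K] (q ζ : K)
    (hq : q ≠ 0) (hq' : ∀ n : ℕ, 0 < n → q ^ n ≠ 1) (hζ : ζ ≠ 0) :
    (LinearIndependent K (fun jp : ℕ × ℕ => WpWm.evec q ζ jp.1 jp.2) ∧
      Submodule.span K (Set.range fun jp : ℕ × ℕ => WpWm.evec q ζ jp.1 jp.2) = ⊤) ∧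
    ((∀ n : ℤ, ζ ^ 2 ≠ q ^ (2 * n)) →
      LinearIndependent K (fun jp : ℕ × ℕ => WmWp.fvec q ζ jp.1 jp.2) ∧
        Submodule.span K (Set.range fun jp : ℕ × ℕ => WmWp.fvec q ζ jp.1 jp.2) = ⊤) := by
  constructor
  · exact part_one q ζ hq hq' hζ
  · intro hζ2
    exact part_two q ζ hq hq' hζ hζ2
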